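/- Given r > 0 and α > 0, there exist constants a, b ∈ ℝ and c > 0 such that the grim reaper curve u : (−π/(2c), π/(2c)) → ℝ², u(s) = (log(sec(c s))/c − a, s − b), satisfies: (1) the open square (−r,r) × (−r,r) is contained in the interior of the convex hull of the image of u; and (2) for every s ∈ (0, π/(2c)) with s − b ≥ −r, the slope of the tangent line to the curve at u(s), which equals cot(c s), satisfies 0 < cot(c s) ≤ α. -/

import Mathlib

open Set Real

noncomputable section

private lemma comb_aux (t x1 y1 x2 y2 : ℝ) :
    (1 - t) • ((x1, y1) : ℝ × ℝ) + t • ((x2, y2) : ℝ × ℝ)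
      = ((1 - t) * x1 + t * x2, (1 - t) * y1 + t * y2) := by
  simp [Prod.smul_mk, Prod.mk_add_mk, smul_eq_mul]

theorem stmt7 (r α : ℝ) (hr : 0 < r) (hα : 0 < α) :
    ∃ a b c : ℝ, 0 < c ∧
      (Ioo (-r) r ×ˢ Ioo (-r) r ⊆
        interior (convexHull ℝ
          ((fun s : ℝ => (Real.log (1 / Real.cos (c * s)) / c - a, s - b)) ''
            Ioo (-(π / (2 * c))) (π / (2 * c))))) ∧
      (∀ s ∈ Ioo (0:ℝ) (π / (2 * c)), -r ≤ s - b →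
        0 < Real.cot (c * s) ∧ Real.cot (c * s) ≤ α) := by
  have hπ := Real.pi_pos
  obtain ⟨θ, hθdef⟩ : ∃ θ : ℝ, θ = Real.arctan α⁻¹ := ⟨_, rfl⟩
  have hθ0 : 0 < θ := by
    rw [hθdef, ← Real.arctan_zero]
    exact Real.arctan_strictMono (by positivity)
  have hθ2 : θ < π / 2 := hθdef ▸ Real.arctan_lt_pi_div_two _
  obtain ⟨c, hcdef⟩ : ∃ c : ℝ, c = (π / 2 - θ) / (4 * r) := ⟨_, rfl⟩
  have hc0 : 0 < c := hcdef ▸ div_pos (by linarith) (by linarith)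
  obtain ⟨b, hbdef⟩ : ∃ b : ℝ, b = r + θ / c := ⟨_, rfl⟩
  have hb0 : 0 < b := by
    have : 0 < θ / c := div_pos hθ0 hc0
    rw [hbdef]; linarith
  have hcr : c * r = (π / 2 - θ) / 4 := by
    rw [hcdef]; field_simp
  have hcb : c * b = c * r + θ := by
    rw [hbdef, mul_add, mul_div_cancel₀ θ hc0.ne']
  have hcbr : c * (b + r) = π / 4 + θ / 2 := by
    have h : c * (b + r) = c * b + c * r := by ring
    rw [h, hcb, hcr]; ring
  have hcbmr : c * (b - r) = θ := by
    have h : c * (b - r) = c * b - c * r := by ring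
    rw [h, hcb]; ring
  have hcos1 : 0 < Real.cos (c * (b + r)) := by
    apply Real.cos_pos_of_mem_Ioo
    rw [hcbr]; constructor <;> [linarith; linarith]
  obtain ⟨K, hK⟩ : ∃ K : ℝ, K = Real.log (1 / Real.cos (c * (b + r))) / c := ⟨_, rfl⟩
  obtain ⟨a, ha⟩ : ∃ a : ℝ, a = K + r := ⟨_, rfl⟩
  obtain ⟨ε, hεdef⟩ :
      ∃ ε : ℝ, ε = min (Real.exp (-(c * (K + 2 * r)))) ((π / 4 - θ / 2) / 2) := ⟨_, rfl⟩
  have hε0 : 0 < ε := hεdef ▸ lt_min (Real.exp_pos _) (by linarith)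
  have hεsmall : ε ≤ (π / 4 - θ / 2) / 2 := hεdef ▸ min_le_right _ _
  obtain ⟨sstar, hsdef⟩ : ∃ s : ℝ, s = (π / 2 - ε) / c := ⟨_, rfl⟩
  have hcs : c * sstar = π / 2 - ε := by
    rw [hsdef, mul_div_cancel₀ _ hc0.ne']
  have hbrs : b + r < sstar := by
    have h1 : c * (b + r) < c * sstar := by rw [hcbr, hcs]; linarith
    exact lt_of_mul_lt_mul_left h1 hc0.le
  have hs0 : 0 < sstar := by linarith
  have hεπ : ε < π := by linarith
  have hsinε : 0 < Real.sin ε := Real.sin_pos_of_pos_of_lt_pi hε0 hεπ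
  have hcoss : Real.cos (c * sstar) = Real.sin ε := by
    rw [hcs, Real.cos_pi_div_two_sub]
  have hsinle : Real.sin ε ≤ Real.exp (-(c * (K + 2 * r))) :=
    (Real.sin_le hε0.le).trans (hεdef ▸ min_le_left _ _)
  have hlog : c * (K + 2 * r) ≤ Real.log (1 / Real.cos (c * sstar)) := by
    rw [hcoss, one_div, Real.log_inv]
    have h := Real.log_le_log hsinε hsinle
    rw [Real.log_exp] at h
    linarith
  obtain ⟨X, hX⟩ : ∃ X : ℝ, X = Real.log (1 / Real.cos (c * sstar)) / c - a := ⟨_, rfl⟩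
  have hXr : r ≤ X := by
    have h1 : K + 2 * r ≤ Real.log (1 / Real.cos (c * sstar)) / c := by
      rw [le_div_iff₀ hc0]
      calc (K + 2 * r) * c = c * (K + 2 * r) := by ring
        _ ≤ _ := hlog
    rw [hX, ha]; linarith
  have hX0 : 0 < X := lt_of_lt_of_le hr hXr
  have hbrlt : b + r < π / (2 * c) := by
    rw [(div_div π 2 c).symm, lt_div_iff₀ hc0]
    calc (b + r) * c = c * (b + r) := by ring
      _ < π / 2 := by rw [hcbr]; linarith
  have hslt : sstar < π / (2 * c) := by
    rw [(div_div π 2 c).symm, lt_div_iff₀ hc0]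
    calc sstar * c = c * sstar := by ring
      _ < π / 2 := by rw [hcs]; linarith
  have hI0 : (0 : ℝ) < π / (2 * c) := by positivity
  refine ⟨a, b, c, hc0, ?_, ?_⟩
  · -- convex hull part
    set C := convexHull ℝ
        ((fun s : ℝ => (Real.log (1 / Real.cos (c * s)) / c - a, s - b)) ''
          Ioo (-(π / (2 * c))) (π / (2 * c))) with hC
    have hCconv : Convex ℝ C := convex_convexHull ℝ _
    have hmem : ∀ s, s ∈ Ioo (-(π / (2 * c))) (π / (2 * c)) →
        (Real.log (1 / Real.cos (c * s)) / c - a, s - b) ∈ C :=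
      fun s hs => subset_convexHull ℝ _ ⟨s, hs, rfl⟩
    have hp1 : ((-r : ℝ), r) ∈ C := by
      have h := hmem (b + r) ⟨by linarith, hbrlt⟩
      rw [show Real.log (1 / Real.cos (c * (b + r))) / c - a = -r by
        rw [← hK, ha]; ring, show b + r - b = r by ring] at h
      exact h
    have hp2 : ((-r : ℝ), -(2 * b + r)) ∈ C := by
      have h := hmem (-(b + r)) ⟨by linarith, by linarith⟩
      rw [show c * -(b + r) = -(c * (b + r)) by ring, Real.cos_neg] at h
      rw [show Real.log (1 / Real.cos (c * (b + r))) / c - a = -r by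
        rw [← hK, ha]; ring, show -(b + r) - b = -(2 * b + r) by ring] at h
      exact h
    have hp3 : (X, sstar - b) ∈ C := by
      have h := hmem sstar ⟨by linarith, hslt⟩
      rwa [← hX] at h
    have hp4 : (X, -sstar - b) ∈ C := by
      have h := hmem (-sstar) ⟨by linarith, by linarith⟩
      rw [show c * -sstar = -(c * sstar) by ring, Real.cos_neg, ← hX,
        show -sstar - b = -sstar - b from rfl] at h
      exact h
    have hbr0 : (0 : ℝ) < b + r := by linarith
    have hZ : ((-r : ℝ), -r) ∈ C := by
      have h1 : (0 : ℝ) ≤ 1 - r / (b + r) := by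
        have : r / (b + r) ≤ 1 := by rw [div_le_one hbr0]; linarith
        linarith
      have h2 : (0 : ℝ) ≤ r / (b + r) := by positivity
      have h := hCconv hp1 hp2 h1 h2 (by ring)
      rw [comb_aux] at h
      have e1 : (1 - r / (b + r)) * (-r) + r / (b + r) * (-r) = -r := by ring
      have e2 : (1 - r / (b + r)) * r + r / (b + r) * (-(2 * b + r)) = -r := by
        field_simp; ring
      rwa [e1, e2] at h
    have hW : (X, r) ∈ C := by
      have hq0 : (0 : ℝ) ≤ (b + r) / sstar := by positivity
      have hq1 : (b + r) / sstar ≤ 1 := by rw [div_le_one hs0]; linarith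
      have hν1 : (0 : ℝ) ≤ 1 - (1 - (b + r) / sstar) / 2 := by linarith
      have hν2 : (0 : ℝ) ≤ (1 - (b + r) / sstar) / 2 := by linarith
      have h := hCconv hp3 hp4 hν1 hν2 (by ring)
      rw [comb_aux] at h
      have e1 : (1 - (1 - (b + r) / sstar) / 2) * X + (1 - (b + r) / sstar) / 2 * X = X := by
        ring
      have e2 : (1 - (1 - (b + r) / sstar) / 2) * (sstar - b)
          + (1 - (b + r) / sstar) / 2 * (-sstar - b) = r := by
        field_simp; ring
      rwa [e1, e2] at h
    have hW' : (X, -r) ∈ C := by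
      have hbmr : (0 : ℝ) < b - r := by
        have : 0 < θ / c := div_pos hθ0 hc0
        rw [hbdef]; linarith
      have hq0 : (0 : ℝ) ≤ (b - r) / sstar := by positivity
      have hq1 : (b - r) / sstar ≤ 1 := by rw [div_le_one hs0]; linarith
      have hν1 : (0 : ℝ) ≤ 1 - (1 - (b - r) / sstar) / 2 := by linarith
      have hν2 : (0 : ℝ) ≤ (1 - (b - r) / sstar) / 2 := by linarith
      have h := hCconv hp3 hp4 hν1 hν2 (by ring)
      rw [comb_aux] at h
      have e1 : (1 - (1 - (b - r) / sstar) / 2) * X + (1 - (b - r) / sstar) / 2 * X = X := by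
        ring
      have e2 : (1 - (1 - (b - r) / sstar) / 2) * (sstar - b)
          + (1 - (b - r) / sstar) / 2 * (-sstar - b) = -r := by
        field_simp; ring
      rwa [e1, e2] at h
    have hXr2 : (0 : ℝ) < X + r := by linarith
    have hl1 : (0 : ℝ) ≤ 1 - 2 * r / (X + r) := by
      have : 2 * r / (X + r) ≤ 1 := by rw [div_le_one hXr2]; linarith
      linarith
    have hl2 : (0 : ℝ) ≤ 2 * r / (X + r) := by positivity
    have hTR : ((r : ℝ), r) ∈ C := by
      have h := hCconv hp1 hW hl1 hl2 (by ring)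
      rw [comb_aux] at h
      have e1 : (1 - 2 * r / (X + r)) * (-r) + 2 * r / (X + r) * X = r := by
        field_simp; ring
      have e2 : (1 - 2 * r / (X + r)) * r + 2 * r / (X + r) * r = r := by ring
      rwa [e1, e2] at h
    have hBR : ((r : ℝ), -r) ∈ C := by
      have h := hCconv hZ hW' hl1 hl2 (by ring)
      rw [comb_aux] at h
      have e1 : (1 - 2 * r / (X + r)) * (-r) + 2 * r / (X + r) * X = r := by
        field_simp; ring
      have e2 : (1 - 2 * r / (X + r)) * (-r) + 2 * r / (X + r) * (-r) = -r := by ring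
      rwa [e1, e2] at h
    have hsq : Icc (-r) r ×ˢ Icc (-r) r ⊆ C := by
      have h4 : (({-r, r} : Set ℝ) ×ˢ ({-r, r} : Set ℝ)) ⊆ C := by
        rintro ⟨x, y⟩ ⟨hx, hy⟩
        simp only [mem_insert_iff, mem_singleton_iff] at hx hy
        rcases hx with rfl | rfl <;> rcases hy with rfl | rfl
        · exact hZ
        · exact hp1
        · exact hBR
        · exact hTR
      have heq : Icc (-r) r ×ˢ Icc (-r) r
          = convexHull ℝ (({-r, r} : Set ℝ) ×ˢ ({-r, r} : Set ℝ)) := by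
        rw [convexHull_prod, convexHull_pair, segment_eq_Icc (by linarith : (-r : ℝ) ≤ r)]
      rw [heq]
      exact convexHull_min h4 hCconv
    have hIoo : Ioo (-r) r ×ˢ Ioo (-r) r = interior (Icc (-r) r ×ˢ Icc (-r) r) := by
      rw [interior_prod_eq, interior_Icc]
    rw [hIoo]
    exact interior_mono hsq
  · -- slope part
    intro s hs hsb
    have h1 : θ ≤ c * s := by
      have h : b - r ≤ s := by linarith
      have h' := mul_le_mul_of_nonneg_left h hc0.le
      rwa [hcbmr] at h'
    have h2 : c * s < π / 2 := by
      have h := mul_lt_mul_of_pos_left hs.2 hc0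
      rwa [show c * (π / (2 * c)) = π / 2 by field_simp] at h
    have h3 : 0 < c * s := mul_pos hc0 hs.1
    have htanle : α⁻¹ ≤ Real.tan (c * s) := by
      have hmono : Real.tan θ ≤ Real.tan (c * s) := by
        rcases eq_or_lt_of_le h1 with h | h
        · rw [h]
        · exact (Real.tan_lt_tan_of_lt_of_lt_pi_div_two (by linarith) h2 h).le
      rwa [hθdef, Real.tan_arctan] at hmono
    have htanpos : 0 < Real.tan (c * s) := lt_of_lt_of_le (by positivity) htanle
    have hcospos : 0 < Real.cos (c * s) := Real.cos_pos_of_mem_Ioo ⟨by linarith, h2⟩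
    have hsinpos : 0 < Real.sin (c * s) := Real.sin_pos_of_pos_of_lt_pi h3 (by linarith)
    have hcot : Real.cot (c * s) = (Real.tan (c * s))⁻¹ := by
      rw [Real.cot_eq_cos_div_sin, Real.tan_eq_sin_div_cos, inv_div]
    constructor
    · rw [Real.cot_eq_cos_div_sin]
      exact div_pos hcospos hsinpos
    · rw [hcot]
      have h := inv_anti₀ (by positivity : (0:ℝ) < α⁻¹) htanle
      rwa [inv_inv] at h
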